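/- For every n ≥ 1, any word over the alphabet {1,...,n} that contains every permutation of {1,...,n} as a subsequence has length at least 2n−1. -/

import Mathlib

/-- For n ≥ 1, any word over {1,...,n} containing every permutation of {1,...,n}
as a subsequence has length at least 2n-1. -/
theorem stmt_8 (n : ℕ) (hn : 1 ≤ n) (T : List ℕ)
    (hT : ∀ x ∈ T, x ∈ Finset.Icc 1 n)
    (h : ∀ π : List ℕ, π.Perm ((List.range n).map (· + 1)) → π.Sublist T) :
    2 * n - 1 ≤ T.length := by
  set L : List ℕ := (List.range n).map (· + 1) with hL
  have hLT : L.Sublist T := h L (List.Perm.refl L)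
  have hLlen : L.length = n := by simp [hL]
  have hLnd : L.Nodup := List.Nodup.map (add_left_injective 1) (List.nodup_range (n := n))
  have hmemT : ∀ x ∈ L, x ∈ T := fun x hx => hLT.mem hx
  -- pick a ∈ L with maximal indexOf in T
  have hsne : L.toFinset.Nonempty := by
    rw [List.toFinset_nonempty_iff]
    intro hnil
    rw [hnil] at hLlen
    simp at hLlen; omega
  obtain ⟨a, haL, hamax⟩ := L.toFinset.exists_max_image (fun x => T.idxOf x) hsne
  rw [List.mem_toFinset] at haL
  -- indexOf is injective on elements of T
  have hinj : Set.InjOn (fun x => T.idxOf x) L.toFinset := by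
    intro x hx y hy hxy
    simp only [Finset.coe_sort_coe, Finset.mem_coe, List.mem_toFinset] at hx hy
    have hx' : x ∈ T := hmemT x hx
    have hy' : y ∈ T := hmemT y hy
    have h1 : T.get ⟨T.idxOf x, List.idxOf_lt_length_iff.2 hx'⟩ = x :=
      List.idxOf_get _
    have h2 : T.get ⟨T.idxOf y, List.idxOf_lt_length_iff.2 hy'⟩ = y :=
      List.idxOf_get _
    simp only at hxy
    rw [← h1, ← h2]
    congr 1
    exact Fin.ext hxy
  -- the image of indexOf has n elements, all ≤ indexOf a, so indexOf a ≥ n-1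
  have hcard : (L.toFinset.image (fun x => T.idxOf x)).card = n := by
    rw [Finset.card_image_of_injOn hinj, List.toFinset_card_of_nodup hLnd, hLlen]
  have hsub : L.toFinset.image (fun x => T.idxOf x) ⊆ Finset.range (T.idxOf a + 1) := by
    intro i hi
    rw [Finset.mem_image] at hi
    obtain ⟨x, hx, rfl⟩ := hi
    rw [Finset.mem_range]
    exact Nat.lt_succ_of_le (hamax x hx)
  have hidx : n - 1 ≤ T.idxOf a := by
    have := Finset.card_le_card hsub
    rw [hcard, Finset.card_range] at this
    omega
  -- the permutation a :: L.erase a is a sublist of T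
  have hperm : (a :: L.erase a).Perm L := (List.perm_cons_erase haL).symm
  have hsubl : (a :: L.erase a).Sublist T := h _ hperm
  -- decompose T
  rw [List.cons_sublist_iff] at hsubl
  obtain ⟨r₁, r₂, hT12, har, hr2⟩ := hsubl
  have h1 : T.idxOf a < r₁.length := by
    rw [hT12, List.idxOf_append_of_mem har]
    exact List.idxOf_lt_length_iff.2 har
  have h2 : n - 1 ≤ r₂.length := by
    have := hr2.length_le
    rw [List.length_erase_of_mem haL, hLlen] at this
    omega
  have h3 : T.length = r₁.length + r₂.length := by
    rw [hT12, List.length_append]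
  omega
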